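/- Let X_1, ..., X_m be (possibly dependent) random variables with common mean μ and common variance σ². Then the k-th order statistic X_{k:m} (the k-th smallest value) satisfies μ - σ√((m-k)/k) ≤ 𝔼[X_{k:m}] ≤ μ + σ√((k-1)/(m-k+1)). -/

import Mathlib

open MeasureTheory ProbabilityTheory

private lemma order_stat_upper (m k : ℕ) (hk : 1 ≤ k) (hkm : k ≤ m) (μm σ : ℝ) (hσ : 0 ≤ σ)
    {Ω : Type*} [MeasureSpace Ω] [IsProbabilityMeasure (ℙ : Measure Ω)]
    (X : Fin m → Ω → ℝ)
    (hL2 : ∀ i, MemLp (X i) 2 (ℙ : Measure Ω))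
    (hmean : ∀ i, ∫ ω, X i ω = μm)
    (hvar : ∀ i, ∫ ω, (X i ω - μm) ^ 2 = σ ^ 2)
    (Y : Ω → ℝ)
    (hYint : Integrable Y (ℙ : Measure Ω))
    (hY : ∀ ω, ∃ e : Equiv.Perm (Fin m), Monotone (fun i => X (e i) ω) ∧
      Y ω = X (e ⟨k - 1, Nat.lt_of_lt_of_le (Nat.sub_lt hk Nat.one_pos) hkm⟩) ω) :
    ∫ ω, Y ω ≤ μm + σ * Real.sqrt (((k : ℝ) - 1) / ((m : ℝ) - k + 1)) := by
  have hXint : ∀ i, Integrable (X i) := fun i => (hL2 i).integrable one_le_two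
  have hMK : (k : ℝ) ≤ (m : ℝ) := by exact_mod_cast hkm
  have hsqnn : 0 ≤ σ * Real.sqrt (((k : ℝ) - 1) / ((m : ℝ) - k + 1)) :=
    mul_nonneg hσ (Real.sqrt_nonneg _)
  rcases eq_or_lt_of_le hk with hk1 | hk2
  · -- k = 1 : Y is the minimum, so E Y ≤ E X₀ = μ
    have hpt : ∀ ω, Y ω ≤ X ⟨0, by omega⟩ ω := by
      intro ω
      obtain ⟨e, hmono, hYe⟩ := hY ω
      have hle : (⟨k - 1, by omega⟩ : Fin m) ≤ e.symm ⟨0, by omega⟩ := by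
        rw [Fin.le_def]; simp; omega
      have := hmono hle
      simp only [Equiv.apply_symm_apply] at this
      rw [hYe]; exact this
    have : ∫ ω, Y ω ≤ ∫ ω, X ⟨0, by omega⟩ ω :=
      integral_mono hYint (hXint _) hpt
    rw [hmean] at this
    linarith
  · -- k ≥ 2
    have hK2 : (2 : ℝ) ≤ (k : ℝ) := by exact_mod_cast hk2
    set R : ℝ := (m : ℝ) - k + 1 with hRdef
    have hR1 : (1 : ℝ) ≤ R := by rw [hRdef]; linarith
    have hR0 : (0 : ℝ) < R := by linarith
    set g : ℝ := Real.sqrt (((k : ℝ) - 1) * R) with hgdef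
    have hg2 : g ^ 2 = ((k : ℝ) - 1) * R :=
      Real.sq_sqrt (mul_nonneg (by linarith) (by linarith))
    have hg0 : (0 : ℝ) < g := by
      rw [hgdef]; exact Real.sqrt_pos.mpr (by nlinarith)
    set s : ℝ := (((k : ℝ) - 1) - R) / (2 * g) with hsdef
    set u : ℝ := σ * s with hudef
    set t : ℝ := μm + u with htdef
    -- pointwise key inequality
    have key : ∀ ω, R * (Y ω - t) ≤ ∑ i, max (X i ω - t) 0 := by
      intro ω
      obtain ⟨e, hmono, hYe⟩ := hY ω
      rw [← Equiv.sum_comp e (fun i => max (X i ω - t) 0)]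
      set a : Fin m := ⟨k - 1, by omega⟩ with hadef
      have hcard : (Finset.Ici a).card = m - k + 1 := by
        rw [Fin.card_Ici]; simp [hadef]; omega
      have h1 : ∀ i ∈ Finset.Ici a, Y ω - t ≤ max (X (e i) ω - t) 0 := by
        intro i hi
        have hx : X (e a) ω ≤ X (e i) ω := hmono (Finset.mem_Ici.mp hi)
        rw [hYe]
        exact le_trans (by linarith) (le_max_left _ _)
      calc R * (Y ω - t) = ∑ _i ∈ Finset.Ici a, (Y ω - t) := by
            rw [Finset.sum_const, hcard, nsmul_eq_mul]
            congr 1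
            rw [hRdef]
            push_cast [Nat.cast_sub hkm]
            ring
        _ ≤ ∑ i ∈ Finset.Ici a, max (X (e i) ω - t) 0 := Finset.sum_le_sum h1
        _ ≤ ∑ i, max (X (e i) ω - t) 0 :=
            Finset.sum_le_sum_of_subset_of_nonneg (Finset.subset_univ _)
              (fun i _ _ => le_max_right _ _)
    have hposint : ∀ i : Fin m, Integrable (fun ω => max (X i ω - t) 0) := fun i =>
      ((hXint i).sub (integrable_const t)).pos_part
    -- integrate the key inequality
    have hint1 : R * ((∫ ω, Y ω) - t) ≤ ∑ i, ∫ ω, max (X i ω - t) 0 := by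
      have h := integral_mono ((hYint.sub (integrable_const t)).const_mul R)
        (integrable_finset_sum _ (fun i _ => hposint i)) key
      rw [integral_finset_sum _ (fun i _ => hposint i)] at h
      calc R * ((∫ ω, Y ω) - t) = ∫ ω, R * (Y ω - t) := by
            rw [integral_const_mul, integral_sub hYint (integrable_const t), integral_const]
            simp
        _ ≤ _ := h
    -- Cauchy-Schwarz bound on E|X i - t|
    have hEabs : ∀ i, ∫ ω, |X i ω - t| ≤ Real.sqrt (σ ^ 2 + u ^ 2) := by
      intro i
      have hW0 : ∫ ω, (X i ω - μm) = 0 := by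
        rw [integral_sub (hXint i) (integrable_const μm), hmean i, integral_const]; simp
      have hWsq : Integrable (fun ω => (X i ω - μm) ^ 2) :=
        ((hL2 i).sub (memLp_const μm)).integrable_sq
      have hWint : Integrable (fun ω => X i ω - μm) := (hXint i).sub (integrable_const μm)
      have hZsq : ∫ ω, (X i ω - t) ^ 2 = σ ^ 2 + u ^ 2 := by
        have heq : ∀ ω, (X i ω - t) ^ 2 = (X i ω - μm) ^ 2 - (2 * u) * (X i ω - μm) + u ^ 2 := by
          intro ω; rw [htdef]; ring
        calc ∫ ω, (X i ω - t) ^ 2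
            = ∫ ω, ((X i ω - μm) ^ 2 - (2 * u) * (X i ω - μm) + u ^ 2) := by
              exact integral_congr_ae (Filter.Eventually.of_forall heq)
          _ = σ ^ 2 + u ^ 2 := by
              have hWcm : Integrable (fun ω => 2 * u * (X i ω - μm)) (ℙ : Measure Ω) :=
                hWint.const_mul (2 * u)
              have hWu : Integrable (fun ω => (X i ω - μm) ^ 2 - 2 * u * (X i ω - μm))
                  (ℙ : Measure Ω) := hWsq.sub hWcm
              rw [integral_add hWu (integrable_const _),
                integral_sub hWsq hWcm,
                integral_const_mul, hW0, hvar i, integral_const]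
              simp
      have hZ2 : MemLp (fun ω => X i ω - t) 2 (ℙ : Measure Ω) := (hL2 i).sub (memLp_const t)
      have hZabs : MemLp (fun ω => |X i ω - t|) 2 (ℙ : Measure Ω) := by
        simpa [Real.norm_eq_abs] using hZ2.norm
      have hvarn := variance_nonneg (fun ω => |X i ω - t|) ℙ
      rw [variance_eq_sub hZabs] at hvarn
      have hsq : ∫ x, ((fun ω => |X i ω - t|) ^ 2) x = σ ^ 2 + u ^ 2 := by
        simp only [Pi.pow_apply, sq_abs]; exact hZsq
      rw [hsq] at hvarn
      have h0 : 0 ≤ ∫ ω, |X i ω - t| := integral_nonneg (fun ω => abs_nonneg _)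
      rw [← Real.sqrt_sq h0]
      exact Real.sqrt_le_sqrt (by linarith)
    -- bound each positive part expectation
    have hEpos : ∀ i, ∫ ω, max (X i ω - t) 0 ≤ (Real.sqrt (σ ^ 2 + u ^ 2) - u) / 2 := by
      intro i
      have hZint : Integrable (fun ω => X i ω - t) (ℙ : Measure Ω) :=
        (hXint i).sub (integrable_const t)
      have habs_int : Integrable (fun ω => |X i ω - t|) (ℙ : Measure Ω) := hZint.abs
      have hmax : ∀ ω, max (X i ω - t) 0 = ((X i ω - t) + |X i ω - t|) / 2 := by
        intro ω; rcases le_total 0 (X i ω - t) with h | h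
        · rw [abs_of_nonneg h, max_eq_left h]; ring
        · rw [abs_of_nonpos h, max_eq_right h]; ring
      have hcalc : ∫ ω, max (X i ω - t) 0
          = ((∫ ω, (X i ω - t)) + ∫ ω, |X i ω - t|) / 2 := by
        calc ∫ ω, max (X i ω - t) 0 = ∫ ω, ((X i ω - t) + |X i ω - t|) / 2 :=
              integral_congr_ae (Filter.Eventually.of_forall hmax)
          _ = _ := by
              rw [integral_div, integral_add hZint habs_int]
      have hmt : ∫ ω, (X i ω - t) = -u := by
        rw [integral_sub (hXint i) (integrable_const t), hmean i, integral_const, htdef]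
        simp
      rw [hcalc, hmt]
      have := hEabs i
      linarith
    have hsum : ∑ i, ∫ ω, max (X i ω - t) 0
        ≤ (m : ℝ) * ((Real.sqrt (σ ^ 2 + u ^ 2) - u) / 2) := by
      calc ∑ i, ∫ ω, max (X i ω - t) 0
          ≤ ∑ _i : Fin m, (Real.sqrt (σ ^ 2 + u ^ 2) - u) / 2 :=
            Finset.sum_le_sum (fun i _ => hEpos i)
        _ = _ := by rw [Finset.sum_const, Finset.card_univ, Fintype.card_fin, nsmul_eq_mul]
    have hfin : ∫ ω, Y ω ≤ t + (m : ℝ) / (2 * R) * (Real.sqrt (σ ^ 2 + u ^ 2) - u) := by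
      have h := le_trans hint1 hsum
      rw [show (m : ℝ) / (2 * R) * (Real.sqrt (σ ^ 2 + u ^ 2) - u)
          = ((m : ℝ) * ((Real.sqrt (σ ^ 2 + u ^ 2) - u) / 2)) / R by
        field_simp
        try ring]
      have h2 : (∫ ω, Y ω) - t ≤ ((m : ℝ) * ((Real.sqrt (σ ^ 2 + u ^ 2) - u) / 2)) / R :=
        (le_div_iff₀ hR0).mpr (by nlinarith)
      linarith
    -- the algebra: the chosen t gives exactly the claimed bound
    have hM : (m : ℝ) = ((k : ℝ) - 1) + R := by rw [hRdef]; ring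
    have hk1 : ((k : ℝ) - 1) ≠ 0 := by linarith
    have hs1 : Real.sqrt (1 + s ^ 2) = (m : ℝ) / (2 * g) := by
      have e1 : s ^ 2 = (((k : ℝ) - 1 - R) ^ 2) / (4 * g ^ 2) := by
        rw [hsdef, div_pow]; ring_nf
      have e2 : ((m : ℝ) / (2 * g)) ^ 2 = ((m : ℝ) ^ 2) / (4 * g ^ 2) := by
        rw [div_pow]; ring_nf
      have h : 1 + s ^ 2 = ((m : ℝ) / (2 * g)) ^ 2 := by
        rw [e1, e2, hM, hg2]
        field_simp
        ring
      rw [h, Real.sqrt_sq (by positivity)]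
    have hsu : Real.sqrt (σ ^ 2 + u ^ 2) = σ * Real.sqrt (1 + s ^ 2) := by
      rw [hudef, show σ ^ 2 + (σ * s) ^ 2 = σ ^ 2 * (1 + s ^ 2) by ring,
        Real.sqrt_mul (sq_nonneg σ), Real.sqrt_sq hσ]
    have hsr : Real.sqrt (((k : ℝ) - 1) / R) = ((k : ℝ) - 1) / g := by
      have h : ((k : ℝ) - 1) / R = (((k : ℝ) - 1) / g) ^ 2 := by
        rw [div_pow, hg2]
        field_simp
      rw [h, Real.sqrt_sq (div_nonneg (by linarith) hg0.le)]
    have halg : t + (m : ℝ) / (2 * R) * (Real.sqrt (σ ^ 2 + u ^ 2) - u)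
        = μm + σ * Real.sqrt (((k : ℝ) - 1) / R) := by
      rw [hsu, hs1, hsr, htdef, hudef, hsdef, hM]
      field_simp
      ring
    linarith [hfin, le_of_eq halg]

/-- If `X 0, …, X (m-1)` are jointly distributed random variables with common mean `μ` and
common variance `σ²`, then the `k`-th order statistic `Y` (the `k`-th smallest value)
satisfies `μ - σ √((m-k)/k) ≤ 𝔼[Y] ≤ μ + σ √((k-1)/(m-k+1))`. -/
theorem stmt10 (m k : ℕ) (hk : 1 ≤ k) (hkm : k ≤ m) (μm σ : ℝ) (hσ : 0 ≤ σ)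
    {Ω : Type*} [MeasureSpace Ω] [IsProbabilityMeasure (ℙ : Measure Ω)]
    (X : Fin m → Ω → ℝ)
    (hL2 : ∀ i, MemLp (X i) 2 (ℙ : Measure Ω))
    (hmean : ∀ i, ∫ ω, X i ω = μm)
    (hvar : ∀ i, ∫ ω, (X i ω - μm) ^ 2 = σ ^ 2)
    (Y : Ω → ℝ)
    (hYint : Integrable Y (ℙ : Measure Ω))
    -- `Y ω` is the `k`-th smallest among `X 0 ω, …, X (m-1) ω`
    (hY : ∀ ω, ∃ e : Equiv.Perm (Fin m), Monotone (fun i => X (e i) ω) ∧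
      Y ω = X (e ⟨k - 1, by omega⟩) ω) :
    μm - σ * Real.sqrt (((m : ℝ) - k) / k) ≤ ∫ ω, Y ω ∧
    ∫ ω, Y ω ≤ μm + σ * Real.sqrt (((k : ℝ) - 1) / ((m : ℝ) - k + 1)) := by
  constructor
  · -- lower bound: apply the upper bound to -X with index m-k+1
    have h := order_stat_upper m (m - k + 1) (by omega) (by omega) (-μm) σ hσ
      (fun i => -(X i)) (fun i => (hL2 i).neg)
      (fun i => by simp only [Pi.neg_apply]; rw [integral_neg, hmean i])
      (fun i => by
        have heq : ∀ ω, ((-(X i)) ω - (-μm)) ^ 2 = (X i ω - μm) ^ 2 := by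
          intro ω; simp only [Pi.neg_apply]; ring
        calc ∫ ω, ((-(X i)) ω - (-μm)) ^ 2 = ∫ ω, (X i ω - μm) ^ 2 :=
              integral_congr_ae (Filter.Eventually.of_forall heq)
          _ = σ ^ 2 := hvar i)
      (fun ω => -(Y ω)) hYint.neg
      (by
        intro ω
        obtain ⟨e, hmono, hYe⟩ := hY ω
        refine ⟨Fin.revPerm.trans e, ?_, ?_⟩
        · intro i j hij
          simp only [Equiv.trans_apply, Pi.neg_apply]
          exact neg_le_neg (hmono (Fin.rev_le_rev.mpr hij))
        · simp only [Equiv.trans_apply, Pi.neg_apply, Fin.revPerm_apply]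
          rw [hYe]
          have hidx : ((⟨m - k + 1 - 1, by omega⟩ : Fin m).rev) = (⟨k - 1, by omega⟩ : Fin m) := by
            apply Fin.ext
            simp [Fin.rev]
            omega
          rw [hidx])
    rw [integral_neg] at h
    have hc1 : ((m - k + 1 : ℕ) : ℝ) = (m : ℝ) - k + 1 := by
      push_cast [Nat.cast_sub hkm]; ring
    rw [hc1] at h
    have hc2 : ((m : ℝ) - ↑k + 1 - 1) / ((m : ℝ) - ((m : ℝ) - ↑k + 1) + 1)
        = ((m : ℝ) - k) / (k : ℝ) := by
      rw [show (m : ℝ) - ((m : ℝ) - ↑k + 1) + 1 = (k : ℝ) by ring,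
        show (m : ℝ) - ↑k + 1 - 1 = (m : ℝ) - ↑k by ring]
    rw [hc2] at h
    linarith
  · exact order_stat_upper m k hk hkm μm σ hσ X hL2 hmean hvar Y hYint hY
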